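/- For every x ∈ 𝔽₂ⁿ, the cubic form α_𝕆 satisfies: α_𝕆(x) = 0 if the Hamming weight wt(x) is congruent to 0 modulo 4, and α_𝕆(x) = 1 otherwise. -/

import Mathlib

open Finset

private def s1 {n : ℕ} (x : Fin n → ZMod 2) : ZMod 2 := ∑ i, x i
private def s2 {n : ℕ} (x : Fin n → ZMod 2) : ZMod 2 :=
  ∑ i, ∑ j, if i < j then x i * x j else 0
private def s3 {n : ℕ} (x : Fin n → ZMod 2) : ZMod 2 :=
  ∑ i, ∑ j, ∑ k, if i < j ∧ j < k then x i * x j * x k else 0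

private lemma s1_cons {n : ℕ} (a : ZMod 2) (y : Fin n → ZMod 2) :
    s1 (Fin.cons a y) = a + s1 y := by
  simp [s1, Fin.sum_univ_succ]

private lemma s2_cons {n : ℕ} (a : ZMod 2) (y : Fin n → ZMod 2) :
    s2 (Fin.cons a y) = a * s1 y + s2 y := by
  simp [s2, s1, Fin.sum_univ_succ, Fin.succ_lt_succ_iff, Fin.succ_pos, mul_sum]

private lemma s3_cons {n : ℕ} (a : ZMod 2) (y : Fin n → ZMod 2) :
    s3 (Fin.cons a y) = a * s2 y + s3 y := by
  simp [s3, s2, Fin.sum_univ_succ, Fin.succ_lt_succ_iff, Fin.succ_pos, mul_sum, mul_assoc]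

private lemma hn_cons {n : ℕ} (a : ZMod 2) (y : Fin n → ZMod 2) :
    hammingNorm (Fin.cons a y : Fin (n + 1) → ZMod 2) =
      (if a = 0 then 0 else 1) + hammingNorm y := by
  unfold hammingNorm
  rw [Finset.card_filter, Finset.card_filter, Fin.sum_univ_succ]
  simp only [Fin.cons_succ, Fin.cons_zero]
  split <;> simp_all

private lemma sums_eq {n : ℕ} (x : Fin n → ZMod 2) :
    s1 x = ((hammingNorm x).choose 1 : ZMod 2) ∧
    s2 x = ((hammingNorm x).choose 2 : ZMod 2) ∧
    s3 x = ((hammingNorm x).choose 3 : ZMod 2) := by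
  induction n with
  | zero =>
      have h : hammingNorm x = 0 := by simp [hammingNorm]
      simp [s1, s2, s3, h]
  | succ n ih =>
      obtain ⟨a, y, rfl⟩ : ∃ a y, x = Fin.cons a y := ⟨x 0, Fin.tail x, (Fin.cons_self_tail x).symm⟩
      obtain ⟨h1, h2, h3⟩ := ih y
      have ha : a = 0 ∨ a = 1 := by fin_cases a <;> [exact Or.inl rfl; exact Or.inr rfl]
      rcases ha with rfl | rfl
      · simp [s1_cons, s2_cons, s3_cons, hn_cons, h1, h2, h3]
      · simp only [s1_cons, s2_cons, s3_cons, hn_cons, h1, h2, h3, one_mul, one_ne_zero,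
          if_false]
        rw [show (1 : ℕ) + hammingNorm y = hammingNorm y + 1 by omega]
        refine ⟨?_, ?_, ?_⟩ <;>
          · rw [Nat.choose_succ_succ] ; push_cast ; simp [Nat.choose_zero_right, add_comm]

private lemma choose_mod4 (w : ℕ) :
    ((w.choose 1 : ZMod 2) = if w % 4 = 1 ∨ w % 4 = 3 then 1 else 0) ∧
    ((w.choose 2 : ZMod 2) = if w % 4 = 2 ∨ w % 4 = 3 then 1 else 0) ∧
    ((w.choose 3 : ZMod 2) = if w % 4 = 3 then 1 else 0) := by
  induction w with
  | zero => simp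
  | succ w ih =>
      obtain ⟨h1, h2, h3⟩ := ih
      have h4 : w % 4 = 0 ∨ w % 4 = 1 ∨ w % 4 = 2 ∨ w % 4 = 3 := by omega
      have e1 : (w + 1).choose 1 = w.choose 0 + w.choose 1 := Nat.choose_succ_succ w 0
      have e2 : (w + 1).choose 2 = w.choose 1 + w.choose 2 := Nat.choose_succ_succ w 1
      have e3 : (w + 1).choose 3 = w.choose 2 + w.choose 3 := Nat.choose_succ_succ w 2
      rcases h4 with h | h | h | h <;>
        · have hs : (w + 1) % 4 = (w % 4 + 1) % 4 := by omega
          rw [e1, e2, e3] ; push_cast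
          rw [h1, h2, h3, hs, h]
          norm_num <;> decide


/-- The cubic form `α_𝕆` on `𝔽₂ⁿ`:
`α_𝕆(x) = Σ_{i<j<k} x_i x_j x_k + Σ_{i<j} x_i x_j + Σ_i x_i`. -/
def alphaO {n : ℕ} (x : Fin n → ZMod 2) : ZMod 2 :=
  (∑ i, ∑ j, ∑ k, if i < j ∧ j < k then x i * x j * x k else 0)
    + (∑ i, ∑ j, if i < j then x i * x j else 0)
    + ∑ i, x i

/-- `α_𝕆` is the counting function: `α_𝕆(x) = 0` if the Hamming weight of `x`
is divisible by `4`, and `α_𝕆(x) = 1` otherwise. -/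
theorem alphaO_eq_counting {n : ℕ} (x : Fin n → ZMod 2) :
    alphaO x = if hammingNorm x % 4 = 0 then 0 else 1 := by
  obtain ⟨h1, h2, h3⟩ := sums_eq x
  obtain ⟨c1, c2, c3⟩ := choose_mod4 (hammingNorm x)
  have : alphaO x = s3 x + s2 x + s1 x := rfl
  rw [this, h1, h2, h3, c1, c2, c3]
  have h4 : hammingNorm x % 4 = 0 ∨ hammingNorm x % 4 = 1 ∨ hammingNorm x % 4 = 2 ∨
      hammingNorm x % 4 = 3 := by omega
  rcases h4 with h | h | h | h <;> rw [h] <;> simp <;> decide
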